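/- Let C⁻_n be an unbalanced signed cycle of odd order n = 2k+1 (a cycle whose edge signs have product −1). Then D^max(C⁻_n) = D^min(C⁻_n) = D^±(C⁻_n), and the spectrum of D^±(C⁻_n) consists of the simple eigenvalue k(−1)^k − (1 − (−1)^k)/2 (equal to k if k is even and −(k+1) if k is odd), together with the eigenvalues λ_j = k(−1)^j / sin((2j+1)π/(2n)) − sin²((2j+1)kπ/(2n)) / sin²((2j+1)π/(2n)), each with multiplicity 2, for j = 0, 1, …, k−1. -/

import Mathlib

open SimpleGraph

/-- The sign (product of edge signs) of a walk in a graph, computed along its darts. -/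
def walkSign {V : Type*} {G : SimpleGraph V} (σ : V → V → ℤ) {u v : V} (p : G.Walk u v) : ℤ :=
  (p.darts.map fun d => σ d.toProd.1 d.toProd.2).prod

/-- `σ` is a signature on `G`: a symmetric function that is `±1`-valued on edges. -/
def IsSignature {V : Type*} (G : SimpleGraph V) (σ : V → V → ℤ) : Prop :=
  (∀ u v, σ u v = σ v u) ∧ ∀ u v, G.Adj u v → σ u v = 1 ∨ σ u v = -1

/-- A signed graph is balanced when every cycle has sign `+1`. -/
def IsBalanced {V : Type*} (G : SimpleGraph V) (σ : V → V → ℤ) : Prop :=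
  ∀ (u : V) (p : G.Walk u u), p.IsCycle → walkSign σ p = 1

/-- A walk is a shortest path when it is a path whose length is the graph distance
between its endpoints. -/
def IsShortestPath {V : Type*} {G : SimpleGraph V} {u v : V} (p : G.Walk u v) : Prop :=
  p.IsPath ∧ p.length = G.dist u v

open scoped Classical in
/-- `σmax u v = +1` if some shortest `u v`-path is positive, `-1` otherwise. -/
noncomputable def sigmaMax {V : Type*} (G : SimpleGraph V) (σ : V → V → ℤ) (u v : V) : ℤ :=
  if ∃ p : G.Walk u v, IsShortestPath p ∧ walkSign σ p = 1 then 1 else -1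

open scoped Classical in
/-- `σmin u v = +1` if all shortest `u v`-paths are positive, `-1` otherwise. -/
noncomputable def sigmaMin {V : Type*} (G : SimpleGraph V) (σ : V → V → ℤ) (u v : V) : ℤ :=
  if ∀ p : G.Walk u v, IsShortestPath p → walkSign σ p = 1 then 1 else -1

/-- The signed distance matrix `D^max`, with `(u,v)` entry `σmax(u,v)·d(u,v)`. -/
noncomputable def Dmax {V : Type*} (G : SimpleGraph V) (σ : V → V → ℤ) : Matrix V V ℝ :=
  Matrix.of fun u v => (sigmaMax G σ u v : ℝ) * (G.dist u v : ℝ)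

/-- The signed distance matrix `D^min`, with `(u,v)` entry `σmin(u,v)·d(u,v)`. -/
noncomputable def Dmin {V : Type*} (G : SimpleGraph V) (σ : V → V → ℤ) : Matrix V V ℝ :=
  Matrix.of fun u v => (sigmaMin G σ u v : ℝ) * (G.dist u v : ℝ)

/-- Two vertices are distance-compatible if all shortest paths between them have the
same sign. -/
def Compatible {V : Type*} (G : SimpleGraph V) (σ : V → V → ℤ) (u v : V) : Prop :=
  ∀ p q : G.Walk u v, IsShortestPath p → IsShortestPath q → walkSign σ p = walkSign σ q

/-- A signed graph is distance-compatible if every pair of vertices is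
distance-compatible. -/
def IsCompatibleGraph {V : Type*} (G : SimpleGraph V) (σ : V → V → ℤ) : Prop :=
  ∀ u v, Compatible G σ u v

/-- The largest eigenvalue of a (symmetric) real matrix: the supremum of the set of real
roots of its characteristic polynomial. -/
noncomputable def largestEigenvalue {n : Type*} [Fintype n] [DecidableEq n]
    (M : Matrix n n ℝ) : ℝ :=
  sSup {x : ℝ | M.charpoly.IsRoot x}


namespace AuxC

open Fin.NatCast Fin.CommRing


variable {k : ℕ}

/-- half-distance function -/
def dm (x : Fin (2 * k + 1)) : ℕ := min x.val (2 * k + 1 - x.val)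

lemma dm_neg (x : Fin (2 * k + 1)) : dm (-x) = dm x := by
  rcases eq_or_ne x 0 with rfl | hx
  · simp
  · have hne : x.val ≠ 0 := fun h => hx (Fin.ext h)
    have hlt := x.isLt
    have h1 : (-x).val = 2 * k + 1 - x.val := by
      rw [Fin.coe_neg, Nat.mod_eq_of_lt (by omega)]
    have := x.isLt
    unfold dm
    omega

lemma dm_add_le (x y : Fin (2 * k + 1)) (hy : y.val = 1 ∨ y.val = 2 * k) :
    dm (x + y) ≤ dm x + 1 := by
  have hx := x.isLt
  have hadd : (x + y).val = (x.val + y.val) % (2 * k + 1) := Fin.val_add x y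
  rcases hy with hy | hy
  · rcases eq_or_lt_of_le (by omega : x.val + 1 ≤ 2 * k + 1) with h | h
    · have : (x.val + y.val) % (2 * k + 1) = 0 := by
        rw [hy]; rw [h]; exact Nat.mod_self _
      unfold dm; omega
    · have : (x.val + y.val) % (2 * k + 1) = x.val + 1 := by
        rw [hy]; apply Nat.mod_eq_of_lt; omega
      unfold dm; omega
  · rcases Nat.eq_zero_or_pos x.val with h | h
    · have : (x.val + y.val) % (2 * k + 1) = 2 * k := by
        rw [hy, h, Nat.zero_add]; apply Nat.mod_eq_of_lt; omega
      unfold dm; omega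
    · have : (x.val + y.val) % (2 * k + 1) = x.val - 1 := by
        rw [hy]
        have : x.val + 2 * k = (x.val - 1) + 1 * (2 * k + 1) := by omega
        rw [this, Nat.add_mul_mod_self_right]
        exact Nat.mod_eq_of_lt (by omega)
      unfold dm; omega

lemma walk_length_lb {u v : Fin (2 * k + 1)} (p : (cycleGraph (2 * k + 1)).Walk u v) :
    dm (v - u) ≤ p.length := by
  induction p with
  | nil => simp [dm]
  | @cons u w v h q ih =>
    have hadj := (cycleGraph_adj').mp h
    have hvu : v - u = (v - w) + (w - u) := by ring
    have hwu : (w - u).val = 1 ∨ (w - u).val = 2 * k := by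
      rcases hadj with h1 | h1
      · right
        have h2 : w - u = -(u - w) := by ring
        rw [h2, Fin.coe_neg, h1, Nat.mod_eq_of_lt (by omega : 2 * k + 1 - 1 < 2 * k + 1)]
        omega
      · left; exact h1
    calc dm (v - u) ≤ dm (v - w) + 1 := by rw [hvu]; exact dm_add_le _ _ hwu
    _ ≤ q.length + 1 := by omega
    _ = (SimpleGraph.Walk.cons h q).length := by simp

lemma exists_walk_up (hk : 0 < k) (u : Fin (2 * k + 1)) (m : ℕ) :
    ∃ p : (cycleGraph (2 * k + 1)).Walk u (u + (m : Fin (2 * k + 1))), p.length = m := by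
  induction m with
  | zero => exact ⟨SimpleGraph.Walk.nil.copy rfl (by simp), by simp⟩
  | succ m ih =>
    obtain ⟨p, hp⟩ := ih
    have hadj : (cycleGraph (2 * k + 1)).Adj (u + (m : Fin (2 * k + 1)))
        (u + ((m + 1 : ℕ) : Fin (2 * k + 1))) := by
      rw [cycleGraph_adj']
      right
      have : (u + ((m + 1 : ℕ) : Fin (2 * k + 1))) - (u + (m : Fin (2 * k + 1))) = 1 := by
        push_cast; ring
      rw [this, Fin.val_one', Nat.mod_eq_of_lt (by omega)]
    exact ⟨p.concat hadj, by simp [hp]⟩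

lemma exists_walk_down (hk : 0 < k) (u : Fin (2 * k + 1)) (m : ℕ) :
    ∃ p : (cycleGraph (2 * k + 1)).Walk u (u - (m : Fin (2 * k + 1))), p.length = m := by
  induction m with
  | zero => exact ⟨SimpleGraph.Walk.nil.copy rfl (by simp), by simp⟩
  | succ m ih =>
    obtain ⟨p, hp⟩ := ih
    have hadj : (cycleGraph (2 * k + 1)).Adj (u - (m : Fin (2 * k + 1)))
        (u - ((m + 1 : ℕ) : Fin (2 * k + 1))) := by
      rw [cycleGraph_adj']
      left
      have : (u - (m : Fin (2 * k + 1))) - (u - ((m + 1 : ℕ) : Fin (2 * k + 1))) = 1 := by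
        push_cast; ring
      rw [this, Fin.val_one', Nat.mod_eq_of_lt (by omega)]
    exact ⟨p.concat hadj, by simp [hp]⟩

lemma cycle_dist (hk : 0 < k) (u v : Fin (2 * k + 1)) :
    (cycleGraph (2 * k + 1)).dist u v = dm (v - u) := by
  have hconn : (cycleGraph (2 * k + 1)).Connected := cycleGraph_connected
  apply le_antisymm
  · rcases le_or_gt (v - u).val (2 * k + 1 - (v - u).val) with h | h
    · obtain ⟨p, hp⟩ := exists_walk_up hk u (v - u).val
      have : u + ((v - u).val : Fin (2 * k + 1)) = v := by
        rw [Fin.cast_val_eq_self]; ring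
      calc (cycleGraph (2 * k + 1)).dist u v ≤ (p.copy rfl this).length :=
            SimpleGraph.dist_le _
      _ = p.length := SimpleGraph.Walk.length_copy _ _ _
      _ = dm (v - u) := by rw [hp]; unfold dm; omega
    · obtain ⟨p, hp⟩ := exists_walk_down hk u (2 * k + 1 - (v - u).val)
      have hc : ((2 * k + 1 - (v - u).val : ℕ) : Fin (2 * k + 1)) = -(v - u) := by
        have hle : (v - u).val ≤ 2 * k + 1 := le_of_lt (v - u).isLt
        rw [Nat.cast_sub hle, Fin.natCast_self, Fin.cast_val_eq_self, zero_sub]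
      have : u - ((2 * k + 1 - (v - u).val : ℕ) : Fin (2 * k + 1)) = v := by
        rw [hc]; ring
      calc (cycleGraph (2 * k + 1)).dist u v ≤ (p.copy rfl this).length :=
            SimpleGraph.dist_le _
      _ = p.length := SimpleGraph.Walk.length_copy _ _ _
      _ = dm (v - u) := by rw [hp]; unfold dm; omega
  · obtain ⟨p, hp⟩ := hconn.exists_walk_length_eq_dist u v
    rw [← hp]
    exact walk_length_lb p



variable {k : ℕ}

lemma pm_cancel {x y : ℤ} (hx : x * x = 1) : x * (x * y) = y := by
  rw [← mul_assoc, hx, one_mul]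

/-- Telescoping: if `σ a b = c * f a * f b` on edges, every walk sign telescopes. -/
lemma walkSign_telescope {V : Type*} {G : SimpleGraph V} {σ : V → V → ℤ} {c : ℤ}
    {f : V → ℤ} (hedge : ∀ a b, G.Adj a b → σ a b = c * f a * f b)
    (hf : ∀ x, f x * f x = 1) {u v : V} (p : G.Walk u v) :
    walkSign σ p = c ^ p.length * f u * f v := by
  induction p with
  | nil => simp [walkSign, hf]
  | @cons u w v h q ih =>
    rw [walkSign, SimpleGraph.Walk.darts_cons, List.map_cons, List.prod_cons]
    have hq : (q.darts.map fun d => σ d.toProd.1 d.toProd.2).prod = walkSign σ q := rfl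
    rw [hq, ih, hedge u w h, SimpleGraph.Walk.length_cons]
    calc c * f u * f w * (c ^ q.length * f w * f v)
        = c ^ (q.length + 1) * f u * f v * (f w * f w) := by ring
      _ = c ^ (q.length + 1) * f u * f v := by rw [hf w, mul_one]

/-- Partial products of the edge signs along `0 → 1 → ⋯ → i`. -/
def ps (σ : Fin (2 * k + 1) → Fin (2 * k + 1) → ℤ) (i : ℕ) : ℤ :=
  ∏ m ∈ Finset.range i, σ (m : Fin (2 * k + 1)) ((m + 1 : ℕ) : Fin (2 * k + 1))

lemma ps_succ (σ : Fin (2 * k + 1) → Fin (2 * k + 1) → ℤ) (i : ℕ) :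
    ps σ (i + 1) = ps σ i * σ (i : Fin (2 * k + 1)) ((i + 1 : ℕ) : Fin (2 * k + 1)) := by
  unfold ps; rw [Finset.prod_range_succ]

lemma val_one_eq (hk : 0 < k) : ((1 : Fin (2 * k + 1))).val = 1 := by
  rw [Fin.val_one']; apply Nat.mod_eq_of_lt; omega

lemma adj_consec (hk : 0 < k) (m : ℕ) :
    (cycleGraph (2 * k + 1)).Adj (m : Fin (2 * k + 1)) ((m + 1 : ℕ) : Fin (2 * k + 1)) := by
  rw [cycleGraph_adj']
  right
  have h1 : ((m + 1 : ℕ) : Fin (2 * k + 1)) - (m : Fin (2 * k + 1)) = 1 := by push_cast; ring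
  rw [h1, val_one_eq hk]

section Sig
variable {σ : Fin (2 * k + 1) → Fin (2 * k + 1) → ℤ}
  (hk : 0 < k) (hσ : IsSignature (cycleGraph (2 * k + 1)) σ)
include hk hσ

omit hk in
lemma sigma_mul_self {a b : Fin (2 * k + 1)} (h : (cycleGraph (2 * k + 1)).Adj a b) :
    σ a b * σ a b = 1 := by
  rcases hσ.2 a b h with h1 | h1 <;> rw [h1] <;> ring

lemma ps_mul_self (i : ℕ) : ps σ i * ps σ i = 1 := by
  induction i with
  | zero => simp [ps]
  | succ i ih =>
    have h2 := sigma_mul_self hσ (adj_consec hk i)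
    unfold ps at ih ⊢
    rw [Finset.prod_range_succ]
    calc (∏ m ∈ Finset.range i, σ (m : Fin (2 * k + 1)) ((m + 1 : ℕ) : Fin (2 * k + 1)))
          * σ (i : Fin (2 * k + 1)) ((i + 1 : ℕ) : Fin (2 * k + 1))
          * ((∏ m ∈ Finset.range i, σ (m : Fin (2 * k + 1)) ((m + 1 : ℕ) : Fin (2 * k + 1)))
          * σ (i : Fin (2 * k + 1)) ((i + 1 : ℕ) : Fin (2 * k + 1)))
        = ((∏ m ∈ Finset.range i, σ (m : Fin (2 * k + 1)) ((m + 1 : ℕ) : Fin (2 * k + 1)))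
          * (∏ m ∈ Finset.range i, σ (m : Fin (2 * k + 1)) ((m + 1 : ℕ) : Fin (2 * k + 1))))
          * (σ (i : Fin (2 * k + 1)) ((i + 1 : ℕ) : Fin (2 * k + 1))
          * σ (i : Fin (2 * k + 1)) ((i + 1 : ℕ) : Fin (2 * k + 1))) := by ring
      _ = 1 := by rw [ih, h2, one_mul]

/-- core edge formula in the `b = a + 1` direction -/
lemma sigma_eq_step {a b : Fin (2 * k + 1)} (hab : (b - a).val = 1) :
    σ a b = ps σ a.val * ps σ b.val * (if b = 0 then ps σ (2 * k + 1) else 1) := by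
  have hadj : (cycleGraph (2 * k + 1)).Adj a b := cycleGraph_adj'.mpr (Or.inr hab)
  have hsq := sigma_mul_self hσ hadj
  have hpsq := ps_mul_self hk hσ a.val
  have hone : (b - a) = 1 := by apply Fin.ext; rw [hab, val_one_eq hk]
  have hne : b = a + 1 := by
    have h3 : b = a + (b - a) := by ring
    rw [h3, hone]
  have ha := a.isLt
  have hcast : ((a.val : ℕ) : Fin (2 * k + 1)) = a := Fin.cast_val_eq_self a
  rcases eq_or_lt_of_le (by omega : a.val + 1 ≤ 2 * k + 1) with h | h
  · -- wrap-around edge : a = 2k, b = 0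
    have hav : a.val = 2 * k := by omega
    have hb0 : b = 0 := by
      apply Fin.ext
      rw [hne, Fin.val_add, val_one_eq hk, h, Nat.mod_self, Fin.val_zero]
    have hcasta : ((2 * k : ℕ) : Fin (2 * k + 1)) = a := by
      apply Fin.ext
      rw [Fin.val_natCast, Nat.mod_eq_of_lt (by omega : 2 * k < 2 * k + 1)]
      omega
    have hcastb : ((2 * k + 1 : ℕ) : Fin (2 * k + 1)) = b := by
      rw [hb0, Fin.natCast_self]
    have hP : ps σ (2 * k + 1) = ps σ a.val * σ a b := by
      rw [ps_succ, hcasta, hcastb, hav]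
    have h0 : ps σ (0 : Fin (2 * k + 1)).val = 1 := by simp [ps]
    rw [if_pos hb0, hb0, h0, mul_one, hP, pm_cancel hpsq, hb0]
  · -- ordinary edge : b.val = a.val + 1
    have hbv : b.val = a.val + 1 := by
      rw [hne, Fin.val_add, val_one_eq hk]; apply Nat.mod_eq_of_lt; omega
    have hb0 : b ≠ 0 := by
      intro h0; rw [h0] at hbv; simp at hbv
    have hcast2 : ((a.val + 1 : ℕ) : Fin (2 * k + 1)) = b := by
      rw [← hbv]; exact Fin.cast_val_eq_self b
    have hps : ps σ b.val = ps σ a.val * σ a b := by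
      rw [hbv, ps_succ, hcast, hcast2]
    rw [if_neg hb0, mul_one, hps, pm_cancel hpsq]

/-- unified switching formula : if the total sign is `e`, then
`σ a b = e * f a * f b` with `f i = e ^ i.val * ps σ i.val`. -/
lemma sigma_edge_formula {e : ℤ} (he : e * e = 1) (hP : ps σ (2 * k + 1) = e)
    {a b : Fin (2 * k + 1)} (h : (cycleGraph (2 * k + 1)).Adj a b) :
    σ a b = e * (e ^ a.val * ps σ a.val) * (e ^ b.val * ps σ b.val) := by
  have epow : ∀ m : ℕ, e ^ (2 * m) = 1 := by
    intro m; rw [pow_mul, show e ^ 2 = 1 by rw [sq]; exact he, one_pow]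
  have epow1 : ∀ m : ℕ, e ^ (2 * m + 1) = e := by
    intro m; rw [pow_succ, epow m, one_mul]
  have main : ∀ a b : Fin (2 * k + 1), (b - a).val = 1 →
      σ a b = e * (e ^ a.val * ps σ a.val) * (e ^ b.val * ps σ b.val) := by
    intro a b hab
    have hstep := sigma_eq_step hk hσ hab
    have hone : (b - a) = 1 := by apply Fin.ext; rw [hab, val_one_eq hk]
    have hne : b = a + 1 := by
      have h3 : b = a + (b - a) := by ring
      rw [h3, hone]
    rcases eq_or_ne b 0 with hb0 | hb0
    · rw [if_pos hb0, hP] at hstep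
      have hav : a.val = 2 * k := by
        have ha1 : a = -1 := by
          have h4 : a = b - 1 := by rw [hne]; ring
          rw [h4, hb0, zero_sub]
        rw [ha1]
        exact Fin.coe_neg_one
      have h0 : ps σ (0 : ℕ) = 1 := by simp [ps]
      rw [hstep, hb0, hav, Fin.val_zero, h0, pow_zero, epow k]
      ring
    · rw [if_neg hb0, mul_one] at hstep
      have hbv : b.val = a.val + 1 := by
        rw [hne, Fin.val_add, val_one_eq hk]
        apply Nat.mod_eq_of_lt
        have := a.isLt
        rcases eq_or_lt_of_le (by omega : a.val + 1 ≤ 2 * k + 1) with h2 | h2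
        · exfalso; apply hb0; apply Fin.ext
          rw [hne, Fin.val_add, val_one_eq hk, h2, Nat.mod_self, Fin.val_zero]
        · exact h2
      rw [hstep, hbv]
      calc ps σ a.val * ps σ (a.val + 1)
          = (e * (e ^ a.val * e ^ a.val * e)) * (ps σ a.val * ps σ (a.val + 1)) := by
            rw [← pow_add, show a.val + a.val = 2 * a.val by ring, epow, one_mul, he, one_mul]
        _ = e * (e ^ a.val * ps σ a.val) * (e ^ (a.val + 1) * ps σ (a.val + 1)) := by
            rw [pow_succ]; ring
  rcases cycleGraph_adj'.mp h with h1 | h1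
  · rw [hσ.1 a b, main b a h1]; ring
  · exact main a b h1

lemma prod_eq_neg_one (hunbal : ¬ IsBalanced (cycleGraph (2 * k + 1)) σ) :
    ps σ (2 * k + 1) = -1 := by
  rcases mul_self_eq_one_iff.mp (ps_mul_self hk hσ (2 * k + 1)) with hP | hP
  · exfalso
    apply hunbal
    intro u p _
    have hf : ∀ x : Fin (2 * k + 1), ((1 : ℤ) ^ x.val * ps σ x.val) * ((1 : ℤ) ^ x.val * ps σ x.val) = 1 := by
      intro x; rw [one_pow, one_mul]; exact ps_mul_self hk hσ x.val
    have := walkSign_telescope (σ := σ) (c := 1)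
      (f := fun x => (1 : ℤ) ^ x.val * ps σ x.val)
      (fun a b hab => sigma_edge_formula hk hσ (by norm_num) hP hab) hf p
    rw [this, one_pow, one_mul, one_pow, one_mul]
    exact ps_mul_self hk hσ u.val
  · exact hP

/-- The final form : with `f i = (-1) ^ i.val * ps σ i.val`, every walk has sign
`(-1) ^ length * f u * f v`. -/
lemma walkSign_eq (hunbal : ¬ IsBalanced (cycleGraph (2 * k + 1)) σ)
    {u v : Fin (2 * k + 1)} (p : (cycleGraph (2 * k + 1)).Walk u v) :
    walkSign σ p = (-1) ^ p.length * ((-1) ^ u.val * ps σ u.val)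
      * ((-1) ^ v.val * ps σ v.val) := by
  apply walkSign_telescope
  · exact fun a b hab =>
      sigma_edge_formula hk hσ (by norm_num) (prod_eq_neg_one hk hσ hunbal) hab
  · intro x
    have h1 := ps_mul_self hk hσ x.val
    have h2 : ((-1 : ℤ) ^ x.val) * ((-1 : ℤ) ^ x.val) = 1 := by
      rw [← pow_add, show x.val + x.val = 2 * x.val by ring, pow_mul]
      norm_num
    calc (-1 : ℤ) ^ x.val * ps σ x.val * ((-1) ^ x.val * ps σ x.val)
        = ((-1 : ℤ) ^ x.val * (-1) ^ x.val) * (ps σ x.val * ps σ x.val) := by ring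
      _ = 1 := by rw [h1, h2, one_mul]

end Sig


/-- derivative-of-geometric-series identity -/
lemma geom (K : ℕ) (x : ℂ) :
    (x - 1) ^ 2 * (∑ m ∈ Finset.range K, ((m : ℂ) + 1) * x ^ (m + 1))
      = K * x ^ (K + 2) - (K + 1) * x ^ (K + 1) + x := by
  induction K with
  | zero => simp
  | succ K ih =>
    rw [Finset.sum_range_succ, mul_add, ih]
    push_cast
    ring

/-- The key eigenvalue identity. -/
lemma key (k : ℕ) (v e1 e2 : ℂ) (hv0 : v ≠ 0) (hv1 : v ^ 2 + 1 ≠ 0)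
    (he1 : e1 = 1 ∨ e1 = -1) (he2 : e2 = 1 ∨ e2 = -1)
    (hvn : v ^ (2 * k + 1) = e1) (he2k : (-1 : ℂ) ^ k = e2) :
    ∑ m ∈ Finset.range k, (-1 : ℂ) ^ (m + 1) * ((m : ℂ) + 1)
        * ((v ^ 2) ^ (m + 1) + (v ^ 2) ^ (2 * k - m))
      = 2 * k * e1 * e2 / (v + v⁻¹) - (2 - e1 * e2 * (v + v⁻¹)) / (v + v⁻¹) ^ 2 := by
  set z : ℂ := v ^ 2 with hz
  clear_value z
  have hz0 : z ≠ 0 := by rw [hz]; exact pow_ne_zero _ hv0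
  have he1sq : e1 * e1 = 1 := by rcases he1 with h | h <;> rw [h] <;> ring
  have hzn : z ^ (2 * k + 1) = 1 := by
    rw [hz, ← pow_mul, show 2 * (2 * k + 1) = (2 * k + 1) * 2 by ring, pow_mul, hvn]
    rw [sq, he1sq]
  -- rewrite each summand
  have hsplit : ∀ m ∈ Finset.range k,
      (-1 : ℂ) ^ (m + 1) * ((m : ℂ) + 1) * (z ^ (m + 1) + z ^ (2 * k - m))
        = ((m : ℂ) + 1) * (-z) ^ (m + 1) + ((m : ℂ) + 1) * (-z⁻¹) ^ (m + 1) := by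
    intro m hm
    have hmk : m < k := Finset.mem_range.mp hm
    have h1 : z ^ (2 * k - m) = (z⁻¹) ^ (m + 1) := by
      have h2 : z ^ (2 * k - m) * z ^ (m + 1) = 1 := by
        rw [← pow_add, show 2 * k - m + (m + 1) = 2 * k + 1 by omega, hzn]
      rw [inv_pow]
      exact eq_inv_of_mul_eq_one_left h2
    rw [h1, neg_pow, neg_pow]
    ring
  rw [Finset.sum_congr rfl hsplit, Finset.sum_add_distrib]
  -- apply geometric identities
  have hX : (-z) - 1 ≠ 0 := by
    intro h
    apply hv1
    linear_combination -h
  have hY : (-z⁻¹) - 1 ≠ 0 := by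
    intro h
    apply hv1
    have h2 : z⁻¹ = -1 := by linear_combination -h
    have h3 : z = -1 := by rw [← inv_inv z, h2]; norm_num
    linear_combination h3
  have hA : ∑ m ∈ Finset.range k, ((m : ℂ) + 1) * (-z) ^ (m + 1)
      = ((k : ℂ) * (-z) ^ (k + 2) - ((k : ℂ) + 1) * (-z) ^ (k + 1) + (-z)) / ((-z) - 1) ^ 2 := by
    rw [eq_div_iff (pow_ne_zero 2 hX), mul_comm]
    exact geom k (-z)
  have hB : ∑ m ∈ Finset.range k, ((m : ℂ) + 1) * (-z⁻¹) ^ (m + 1)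
      = ((k : ℂ) * (-z⁻¹) ^ (k + 2) - ((k : ℂ) + 1) * (-z⁻¹) ^ (k + 1) + (-z⁻¹)) / ((-z⁻¹) - 1) ^ 2 := by
    rw [eq_div_iff (pow_ne_zero 2 hY), mul_comm]
    exact geom k (-z⁻¹)
  rw [hA, hB]
  -- power reductions
  have hzk1 : z ^ (k + 1) = e1 * v := by
    rw [hz, ← pow_mul, show 2 * (k + 1) = (2 * k + 1) + 1 by ring, pow_succ, hvn]
  have hzk2 : z ^ (k + 2) = e1 * v ^ 3 := by
    rw [hz, ← pow_mul, show 2 * (k + 2) = (2 * k + 1) + 3 by ring, pow_add, hvn]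
  have hwk1 : (z⁻¹) ^ (k + 1) = e1 * v⁻¹ := by
    rw [inv_pow, hzk1]
    rcases he1 with h | h <;> rw [h] <;> simp [mul_inv, inv_neg]
  have hwk2 : (z⁻¹) ^ (k + 2) = e1 * (v ^ 3)⁻¹ := by
    rw [inv_pow, hzk2]
    rcases he1 with h | h <;> rw [h] <;> simp [mul_inv, inv_neg]
  have hnegk1 : (-z) ^ (k + 1) = -e2 * (e1 * v) := by
    rw [neg_pow, pow_succ, he2k, hzk1]; ring
  have hnegk2 : (-z) ^ (k + 2) = e2 * (e1 * v ^ 3) := by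
    rw [neg_pow, show k + 2 = k + 2 by rfl, pow_add, he2k, hzk2]; ring
  have hnegwk1 : (-z⁻¹) ^ (k + 1) = -e2 * (e1 * v⁻¹) := by
    rw [neg_pow, pow_succ, he2k, hwk1]; ring
  have hnegwk2 : (-z⁻¹) ^ (k + 2) = e2 * (e1 * (v ^ 3)⁻¹) := by
    rw [neg_pow, pow_add, he2k, hwk2]; ring
  rw [hnegk1, hnegk2, hnegwk1, hnegwk2]
  rw [hz] at hX hY hv1 ⊢
  have hvv : v + v⁻¹ ≠ 0 := by
    intro h
    apply hv1
    have hx0 : v * (v + v⁻¹) = v ^ 2 + 1 := by field_simp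
    rw [h, mul_zero] at hx0
    exact hx0.symm
  have hx : v * (v + v⁻¹) = v ^ 2 + 1 := by field_simp
  have hstep1 : ((k : ℂ) * (e2 * (e1 * v ^ 3)) - ((k : ℂ) + 1) * (-e2 * (e1 * v)) + -(v ^ 2))
        / (-(v ^ 2) - 1) ^ 2
      = (e1 * e2 * ((k : ℂ) * v ^ 3 + ((k : ℂ) + 1) * v) - v ^ 2) / (v * (v + v⁻¹)) ^ 2 := by
    rw [hx, div_eq_div_iff (pow_ne_zero _ hX) (pow_ne_zero _ hv1)]
    ring
  have hstep2 : ((k : ℂ) * (e2 * (e1 * (v ^ 3)⁻¹)) - ((k : ℂ) + 1) * (-e2 * (e1 * v⁻¹)) + -(v ^ 2)⁻¹)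
        / (-(v ^ 2)⁻¹ - 1) ^ 2
      = (e1 * e2 * ((k : ℂ) * v + ((k : ℂ) + 1) * v ^ 3) - v ^ 2) / (v * (v + v⁻¹)) ^ 2 := by
    rw [hx, div_eq_div_iff (pow_ne_zero _ hY) (pow_ne_zero _ hv1)]
    field_simp
    ring
  rw [hstep1, hstep2, ← add_div,
    div_sub_div _ _ hvv (pow_ne_zero 2 hvv),
    div_eq_div_iff (pow_ne_zero 2 (mul_ne_zero hv0 hvv)) (mul_ne_zero hvv (pow_ne_zero 2 hvv))]
  field_simp
  ring


open Real in
noncomputable def lam0 (k : ℕ) : ℝ := (k : ℝ) * (-1) ^ k - (1 - (-1 : ℝ) ^ k) / 2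

open Real in
noncomputable def mu (k j : ℕ) : ℝ :=
  (k : ℝ) * (-1) ^ j / Real.sin ((2 * (j : ℝ) + 1) * π / (2 * (2 * (k : ℝ) + 1))) -
    (Real.sin ((2 * (j : ℝ) + 1) * (k : ℝ) * π / (2 * (2 * (k : ℝ) + 1)))) ^ 2 /
      (Real.sin ((2 * (j : ℝ) + 1) * π / (2 * (2 * (k : ℝ) + 1)))) ^ 2

noncomputable def rhoNat (k : ℕ) (m : ℕ) : ℝ :=
  if m = 0 then lam0 k else mu k (if m ≤ k then k - m else m - (k + 1))


/-- the switching function -/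
def sw (σ : Fin (2 * k + 1) → Fin (2 * k + 1) → ℤ) (i : Fin (2 * k + 1)) : ℤ :=
  (-1) ^ i.val * ps σ i.val

section Main
variable {σ : Fin (2 * k + 1) → Fin (2 * k + 1) → ℤ}
  (hk : 0 < k) (hσ : IsSignature (cycleGraph (2 * k + 1)) σ)
  (hunbal : ¬ IsBalanced (cycleGraph (2 * k + 1)) σ)
include hk hσ hunbal

omit hσ hunbal in
lemma sw_mul_self (hσ : IsSignature (cycleGraph (2 * k + 1)) σ) (x : Fin (2 * k + 1)) :
    sw σ x * sw σ x = 1 := by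
  have h1 := ps_mul_self hk hσ x.val
  have h2 : ((-1 : ℤ) ^ x.val) * ((-1 : ℤ) ^ x.val) = 1 := by
    rw [← pow_add, show x.val + x.val = 2 * x.val by ring, pow_mul]
    norm_num
  unfold sw
  calc (-1 : ℤ) ^ x.val * ps σ x.val * ((-1) ^ x.val * ps σ x.val)
      = ((-1 : ℤ) ^ x.val * (-1) ^ x.val) * (ps σ x.val * ps σ x.val) := by ring
    _ = 1 := by rw [h1, h2, one_mul]

omit hk hσ hunbal in
lemma exists_shortest (u v : Fin (2 * k + 1)) :
    ∃ p : (cycleGraph (2 * k + 1)).Walk u v, IsShortestPath p := by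
  have hconn : (cycleGraph (2 * k + 1)).Connected := cycleGraph_connected
  obtain ⟨p, hp⟩ := hconn.exists_walk_length_eq_dist u v
  refine ⟨p.bypass, p.bypass_isPath, le_antisymm ?_ (SimpleGraph.dist_le _)⟩
  calc p.bypass.length ≤ p.length := SimpleGraph.Walk.length_bypass_le p
    _ = (cycleGraph (2 * k + 1)).dist u v := hp

lemma shortest_sign {u v : Fin (2 * k + 1)} {p : (cycleGraph (2 * k + 1)).Walk u v}
    (hp : IsShortestPath p) :
    walkSign σ p = (-1) ^ ((cycleGraph (2 * k + 1)).dist u v) * sw σ u * sw σ v := by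
  rw [walkSign_eq hk hσ hunbal p, hp.2]; rfl

lemma sigma_max_min_eq (u v : Fin (2 * k + 1)) :
    sigmaMax (cycleGraph (2 * k + 1)) σ u v
      = (-1) ^ ((cycleGraph (2 * k + 1)).dist u v) * sw σ u * sw σ v ∧
    sigmaMin (cycleGraph (2 * k + 1)) σ u v
      = (-1) ^ ((cycleGraph (2 * k + 1)).dist u v) * sw σ u * sw σ v := by
  set s := (-1 : ℤ) ^ ((cycleGraph (2 * k + 1)).dist u v) * sw σ u * sw σ v with hs
  have hsq : s * s = 1 := by
    have h1 := sw_mul_self hk hσ u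
    have h2 := sw_mul_self hk hσ v
    have h3 : ((-1 : ℤ) ^ ((cycleGraph (2 * k + 1)).dist u v))
        * ((-1 : ℤ) ^ ((cycleGraph (2 * k + 1)).dist u v)) = 1 := by
      rw [← pow_add, show ∀ m : ℕ, m + m = 2 * m by intro m; ring, pow_mul]
      norm_num
    calc s * s = (((-1 : ℤ) ^ ((cycleGraph (2 * k + 1)).dist u v))
          * ((-1 : ℤ) ^ ((cycleGraph (2 * k + 1)).dist u v)))
          * (sw σ u * sw σ u) * (sw σ v * sw σ v) := by rw [hs]; ring
      _ = 1 := by rw [h1, h2, h3]; ring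
  obtain ⟨p₀, hp₀⟩ := exists_shortest u v
  rcases mul_self_eq_one_iff.mp hsq with h1 | h1
  · constructor
    · rw [sigmaMax, if_pos ⟨p₀, hp₀, by rw [shortest_sign hk hσ hunbal hp₀, ← hs, h1]⟩, h1]
    · rw [sigmaMin, if_pos fun p hp => by rw [shortest_sign hk hσ hunbal hp, ← hs, h1], h1]
  · constructor
    · rw [sigmaMax, if_neg, h1]
      rintro ⟨p, hp, hsign⟩
      rw [shortest_sign hk hσ hunbal hp, ← hs, h1] at hsign
      norm_num at hsign
    · rw [sigmaMin, if_neg, h1]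
      intro hall
      have := hall p₀ hp₀
      rw [shortest_sign hk hσ hunbal hp₀, ← hs, h1] at this
      norm_num at this

lemma Dmax_eq_Dmin : Dmax (cycleGraph (2 * k + 1)) σ = Dmin (cycleGraph (2 * k + 1)) σ := by
  ext u v
  rw [Dmax, Dmin, Matrix.of_apply, Matrix.of_apply,
    (sigma_max_min_eq hk hσ hunbal u v).1, (sigma_max_min_eq hk hσ hunbal u v).2]

/-- the real circulant matrix -/
noncomputable def circMat (k : ℕ) : Matrix (Fin (2 * k + 1)) (Fin (2 * k + 1)) ℝ :=
  Matrix.circulant fun x => (-1 : ℝ) ^ (dm x) * (dm x : ℝ)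

/-- the diagonal switching matrix -/
noncomputable def swMat (σ : Fin (2 * k + 1) → Fin (2 * k + 1) → ℤ) :
    Matrix (Fin (2 * k + 1)) (Fin (2 * k + 1)) ℝ :=
  Matrix.diagonal fun i => ((sw σ i : ℤ) : ℝ)

lemma Dmax_conj : Dmax (cycleGraph (2 * k + 1)) σ = swMat σ * circMat k * swMat σ := by
  ext u v
  rw [Matrix.mul_apply]
  have hdiag : ∀ j, (swMat σ * circMat k) u j * swMat σ j v
      = (if j = v then (swMat σ * circMat k) u j * ((sw σ v : ℤ) : ℝ) else 0) := by
    intro j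
    rw [swMat, Matrix.diagonal_apply]
    split_ifs with h
    · rw [h]
    · rw [mul_zero]
  rw [Finset.sum_congr rfl fun j _ => hdiag j, Finset.sum_ite_eq' Finset.univ v _, if_pos (Finset.mem_univ v)]
  rw [Matrix.mul_apply]
  have hdiag2 : ∀ j, swMat σ u j * circMat k j v
      = (if u = j then ((sw σ u : ℤ) : ℝ) * circMat k j v else 0) := by
    intro j
    rw [swMat, Matrix.diagonal_apply]
    split_ifs with h
    · rw [h]
    · rw [zero_mul]
  rw [Finset.sum_congr rfl fun j _ => hdiag2 j, Finset.sum_ite_eq Finset.univ u _, if_pos (Finset.mem_univ u)]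
  rw [Dmax, Matrix.of_apply, (sigma_max_min_eq hk hσ hunbal u v).1,
    cycle_dist hk u v, circMat, Matrix.circulant_apply]
  have : dm (u - v) = dm (v - u) := by
    rw [show u - v = -(v - u) by ring, dm_neg]
  rw [this]
  push_cast
  ring

end Main

/-- charpoly is invariant under conjugation by an involution -/
lemma charpoly_conj_inv {m : Type*} [Fintype m] [DecidableEq m] {R : Type*} [CommRing R]
    (A P : Matrix m m R) (hP : P * P = 1) : (P * A * P).charpoly = A.charpoly := by
  have hmap : (P.map Polynomial.C) * (P.map Polynomial.C) = 1 := by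
    rw [← Matrix.map_mul, hP]
    exact Matrix.map_one _ (Polynomial.C_0) (Polynomial.C_1)
  have hcomm := Matrix.scalar_commute (n := m) (Polynomial.X : Polynomial R)
    (fun r' => Commute.all _ r') (P.map Polynomial.C)
  have hch : (P * A * P).charmatrix
      = P.map Polynomial.C * A.charmatrix * P.map Polynomial.C := by
    unfold Matrix.charmatrix
    simp only [RingHom.mapMatrix_apply]
    rw [Matrix.mul_sub, Matrix.sub_mul]
    congr 1
    · calc Matrix.scalar m (Polynomial.X : Polynomial R)
          = (P.map Polynomial.C) * (Matrix.scalar m Polynomial.X * (P.map Polynomial.C)) := by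
            rw [hcomm.eq, ← Matrix.mul_assoc, hmap, Matrix.one_mul]
        _ = (P.map Polynomial.C) * Matrix.scalar m Polynomial.X * (P.map Polynomial.C) := by
            rw [Matrix.mul_assoc]
    · rw [Matrix.map_mul, Matrix.map_mul]
  rw [Matrix.charpoly, Matrix.charpoly, hch, Matrix.det_mul, Matrix.det_mul]
  have hdet : (P.map Polynomial.C).det * (P.map Polynomial.C).det = 1 := by
    rw [← Matrix.det_mul, hmap, Matrix.det_one]
  calc (P.map Polynomial.C).det * (A.charmatrix).det * (P.map Polynomial.C).det
      = ((P.map Polynomial.C).det * (P.map Polynomial.C).det) * (A.charmatrix).det := by ring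
    _ = (A.charmatrix).det := by rw [hdet, one_mul]

lemma swMat_sq {σ : Fin (2 * k + 1) → Fin (2 * k + 1) → ℤ} (hk : 0 < k)
    (hσ : IsSignature (cycleGraph (2 * k + 1)) σ) : swMat σ * swMat σ = 1 := by
  rw [swMat, Matrix.diagonal_mul_diagonal]
  have : ∀ i, ((sw σ i : ℤ) : ℝ) * ((sw σ i : ℤ) : ℝ) = 1 := by
    intro i
    have h := sw_mul_self hk hσ i
    exact_mod_cast h
  rw [show (fun i => ((sw σ i : ℤ) : ℝ) * ((sw σ i : ℤ) : ℝ)) = fun _ => (1 : ℝ) from funext this]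
  exact Matrix.diagonal_one

lemma Dmax_charpoly {σ : Fin (2 * k + 1) → Fin (2 * k + 1) → ℤ} (hk : 0 < k)
    (hσ : IsSignature (cycleGraph (2 * k + 1)) σ)
    (hunbal : ¬ IsBalanced (cycleGraph (2 * k + 1)) σ) :
    (Dmax (cycleGraph (2 * k + 1)) σ).charpoly = (circMat k).charpoly := by
  rw [Dmax_conj hk hσ hunbal]
  exact charpoly_conj_inv _ _ (swMat_sq hk hσ)


open Real Complex

/-- The main analytic evaluation. -/
lemma sum_eq_rho (k : ℕ) (hk : 0 < k) (m : ℕ) (hm : m ≤ 2 * k) :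
    ∑ mm ∈ Finset.range k, (-1 : ℂ) ^ (mm + 1) * ((mm : ℂ) + 1)
        * (((Complex.exp (Real.pi * Complex.I * m / (2 * k + 1))) ^ 2) ^ (mm + 1)
          + ((Complex.exp (Real.pi * Complex.I * m / (2 * k + 1))) ^ 2) ^ (2 * k - mm))
      = ((rhoNat k m : ℝ) : ℂ) := by
  set v : ℂ := Complex.exp (Real.pi * Complex.I * m / (2 * k + 1)) with hv
  have hn0 : ((2 * k + 1 : ℕ) : ℂ) ≠ 0 := Nat.cast_ne_zero.mpr (by omega)
  have hn0' : ((2 : ℂ) * k + 1) ≠ 0 := by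
    push_cast at hn0; exact hn0
  have hv0 : v ≠ 0 := Complex.exp_ne_zero _
  have hvn : v ^ (2 * k + 1) = (-1 : ℂ) ^ m := by
    rw [hv, ← Complex.exp_nat_mul]
    have harg : ((2 * k + 1 : ℕ) : ℂ) * (Real.pi * Complex.I * m / (2 * k + 1))
        = m * (Real.pi * Complex.I) := by
      push_cast
      field_simp
    rw [harg, Complex.exp_nat_mul, Complex.exp_pi_mul_I]
  have he1 : (-1 : ℂ) ^ m = 1 ∨ (-1 : ℂ) ^ m = -1 := by
    rcases Nat.even_or_odd m with h | h
    · exact Or.inl (Even.neg_one_pow h)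
    · exact Or.inr (Odd.neg_one_pow h)
  have he2 : (-1 : ℂ) ^ k = 1 ∨ (-1 : ℂ) ^ k = -1 := by
    rcases Nat.even_or_odd k with h | h
    · exact Or.inl (Even.neg_one_pow h)
    · exact Or.inr (Odd.neg_one_pow h)
  have hv1 : v ^ 2 + 1 ≠ 0 := by
    intro h
    have h2 : v ^ 2 = -1 := by linear_combination h
    have h4 : (v ^ 2) ^ (2 * k + 1) = ((-1 : ℂ) ^ m) ^ 2 := by
      rw [← hvn]; ring
    rw [h2] at h4
    have h5 : ((-1 : ℂ)) ^ (2 * k + 1) = -1 := Odd.neg_one_pow ⟨k, by ring⟩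
    have h6 : ((-1 : ℂ) ^ m) ^ 2 = 1 := by
      rcases he1 with h | h <;> rw [h] <;> norm_num
    rw [h5, h6] at h4
    norm_num at h4
  have hvv : v + v⁻¹ ≠ 0 := by
    intro h
    apply hv1
    have hx0 : v * (v + v⁻¹) = v ^ 2 + 1 := by field_simp
    rw [h, mul_zero] at hx0
    exact hx0.symm
  rw [key k v ((-1 : ℂ) ^ m) ((-1 : ℂ) ^ k) hv0 hv1 he1 he2 hvn rfl]
  -- now the right-hand side computation
  rcases Nat.eq_zero_or_pos m with hm0 | hm0
  · -- m = 0 : v = 1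
    have hv1' : v = 1 := by
      rw [hv, hm0]
      push_cast
      rw [mul_zero, zero_div, Complex.exp_zero]
    rw [hm0, hv1']
    rw [rhoNat, if_pos rfl, lam0]
    push_cast
    norm_num
    ring
  · -- m ≥ 1
    have hcos1 : ((Real.cos ((m : ℝ) * Real.pi / (2 * k + 1)) : ℝ) : ℂ) * 2 = v + v⁻¹ := by
      rw [Complex.ofReal_cos, mul_comm, Complex.two_cos, hv, ← Complex.exp_neg]
      congr 2
      · push_cast; ring
      · push_cast; ring
    have hcos2 : ((Real.cos (2 * (k : ℝ) * m * Real.pi / (2 * k + 1)) : ℝ) : ℂ) * 2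
        = (-1 : ℂ) ^ m * (v + v⁻¹) := by
      have hexp : Complex.exp (((2 * (k : ℝ) * m * Real.pi / (2 * k + 1) : ℝ) : ℂ) * Complex.I)
          = v ^ (2 * k) := by
        rw [hv, ← Complex.exp_nat_mul]
        congr 1
        push_cast
        field_simp
      have hv2k : v ^ (2 * k) = (-1 : ℂ) ^ m * v⁻¹ := by
        have : v ^ (2 * k) * v = (-1 : ℂ) ^ m := by rw [← pow_succ, hvn]
        field_simp at this ⊢
        linear_combination this
      have hv2kinv : (v ^ (2 * k))⁻¹ = (-1 : ℂ) ^ m * v := by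
        rw [hv2k]
        rcases he1 with h | h <;> rw [h] <;> simp [mul_inv, inv_neg] <;> ring
      have hexp2 : Complex.exp (-((2 * (k : ℝ) * m * Real.pi / (2 * k + 1) : ℝ) : ℂ) * Complex.I)
          = (v ^ (2 * k))⁻¹ := by
        rw [neg_mul, Complex.exp_neg, hexp]
      rw [Complex.ofReal_cos, mul_comm, Complex.two_cos, hexp, hexp2, hv2kinv, hv2k]
      ring
    -- abbreviations
    have hpi : Real.pi ≠ 0 := Real.pi_ne_zero
    have hnR : (2 * (k : ℝ) + 1) ≠ 0 := by positivity
    have hC1ne : ((Real.cos ((m : ℝ) * Real.pi / (2 * k + 1)) : ℝ) : ℂ) ≠ 0 := by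
      intro h
      rw [h, zero_mul] at hcos1
      exact hvv hcos1.symm
    rcases le_or_gt m k with hmk | hmk
    · -- m ≤ k, j = k - m
      have hjc : ((k - m : ℕ) : ℝ) = (k : ℝ) - m := by
        rw [Nat.cast_sub hmk]
      have s1eq : Real.sin ((2 * ((k - m : ℕ) : ℝ) + 1) * Real.pi / (2 * (2 * (k : ℝ) + 1)))
          = Real.cos ((m : ℝ) * Real.pi / (2 * k + 1)) := by
        rw [hjc, show (2 * ((k : ℝ) - m) + 1) * Real.pi / (2 * (2 * (k : ℝ) + 1))
            = Real.pi / 2 - (m : ℝ) * Real.pi / (2 * (k : ℝ) + 1) by field_simp; ring,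
          Real.sin_pi_div_two_sub]
      have s2eq : (Real.sin ((2 * ((k - m : ℕ) : ℝ) + 1) * (k : ℝ) * Real.pi
            / (2 * (2 * (k : ℝ) + 1)))) ^ 2
          = 1 / 2 - ((-1 : ℝ) ^ k * Real.cos (2 * (k : ℝ) * m * Real.pi / (2 * k + 1))) / 2 := by
        rw [Real.sin_sq, Real.cos_sq, hjc,
          show 2 * ((2 * ((k : ℝ) - m) + 1) * (k : ℝ) * Real.pi / (2 * (2 * (k : ℝ) + 1)))
            = (k : ℝ) * Real.pi - 2 * (k : ℝ) * m * Real.pi / (2 * (k : ℝ) + 1) by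
              field_simp; ring,
          Real.cos_nat_mul_pi_sub]
        ring
      have hreal : rhoNat k m
          = (k : ℝ) * (-1) ^ (k - m) / Real.cos ((m : ℝ) * Real.pi / (2 * k + 1))
            - (1 / 2 - ((-1 : ℝ) ^ k
                * Real.cos (2 * (k : ℝ) * m * Real.pi / (2 * k + 1))) / 2)
              / (Real.cos ((m : ℝ) * Real.pi / (2 * k + 1))) ^ 2 := by
        rw [rhoNat, if_neg (by omega), if_pos hmk, mu, s1eq, s2eq]
      rw [hreal]
      have hj2 : (-1 : ℂ) ^ (k - m) = (-1 : ℂ) ^ k * (-1 : ℂ) ^ m := by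
        have h1 : (-1 : ℂ) ^ (k - m) * (-1 : ℂ) ^ m = (-1 : ℂ) ^ k := by
          rw [← pow_add, show k - m + m = k by omega]
        have h2 : (-1 : ℂ) ^ m * (-1 : ℂ) ^ m = 1 := by
          rw [← pow_add]
          exact Even.neg_one_pow ⟨m, by ring⟩
        calc (-1 : ℂ) ^ (k - m) = (-1 : ℂ) ^ (k - m) * ((-1 : ℂ) ^ m * (-1 : ℂ) ^ m) := by
              rw [h2, mul_one]
          _ = (-1 : ℂ) ^ k * (-1 : ℂ) ^ m := by rw [← mul_assoc, h1]
      push_cast [-Complex.ofReal_cos]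
      rw [hj2, ← hcos1]
      have h3 : ((Real.cos (2 * (k : ℝ) * m * Real.pi / (2 * k + 1)) : ℝ) : ℂ)
          = (-1 : ℂ) ^ m * ((Real.cos ((m : ℝ) * Real.pi / (2 * k + 1)) : ℝ) : ℂ) := by
        have := hcos2
        rw [← hcos1] at this
        linear_combination this / 2
      rw [h3]
      field_simp
    · -- m > k, j = m - k - 1
      have hjc : ((m - (k + 1) : ℕ) : ℝ) = (m : ℝ) - (k : ℝ) - 1 := by
        rw [Nat.cast_sub (by omega)]
        push_cast
        ring
      have s1eq : Real.sin ((2 * ((m - (k + 1) : ℕ) : ℝ) + 1) * Real.pi / (2 * (2 * (k : ℝ) + 1)))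
          = -Real.cos ((m : ℝ) * Real.pi / (2 * k + 1)) := by
        rw [hjc, show (2 * ((m : ℝ) - (k : ℝ) - 1) + 1) * Real.pi / (2 * (2 * (k : ℝ) + 1))
            = (m : ℝ) * Real.pi / (2 * (k : ℝ) + 1) - Real.pi / 2 by field_simp; ring,
          Real.sin_sub, Real.sin_pi_div_two, Real.cos_pi_div_two]
        ring
      have hker : Real.cos ((k : ℝ) * Real.pi) = (-1 : ℝ) ^ k := by
        have := Real.cos_nat_mul_pi_sub 0 k
        simpa using this
      have s2eq : (Real.sin ((2 * ((m - (k + 1) : ℕ) : ℝ) + 1) * (k : ℝ) * Real.pi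
            / (2 * (2 * (k : ℝ) + 1)))) ^ 2
          = 1 / 2 - ((-1 : ℝ) ^ k * Real.cos (2 * (k : ℝ) * m * Real.pi / (2 * k + 1))) / 2 := by
        rw [Real.sin_sq, Real.cos_sq, hjc,
          show 2 * ((2 * ((m : ℝ) - (k : ℝ) - 1) + 1) * (k : ℝ) * Real.pi / (2 * (2 * (k : ℝ) + 1)))
            = 2 * (k : ℝ) * m * Real.pi / (2 * (k : ℝ) + 1) - (k : ℝ) * Real.pi by
              field_simp; ring,
          Real.cos_sub, hker, Real.sin_nat_mul_pi]
        ring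
      have hreal : rhoNat k m
          = (k : ℝ) * (-1) ^ (m - (k + 1)) / (-Real.cos ((m : ℝ) * Real.pi / (2 * k + 1)))
            - (1 / 2 - ((-1 : ℝ) ^ k
                * Real.cos (2 * (k : ℝ) * m * Real.pi / (2 * k + 1))) / 2)
              / (-Real.cos ((m : ℝ) * Real.pi / (2 * k + 1))) ^ 2 := by
        rw [rhoNat, if_neg (by omega), if_neg (by omega), mu, s1eq, s2eq]
      rw [hreal]
      have hj2 : (-1 : ℂ) ^ (m - (k + 1)) = -((-1 : ℂ) ^ k * (-1 : ℂ) ^ m) := by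
        have h1 : (-1 : ℂ) ^ (m - (k + 1)) * (-1 : ℂ) ^ (k + 1) = (-1 : ℂ) ^ m := by
          rw [← pow_add, show m - (k + 1) + (k + 1) = m by omega]
        have h2 : (-1 : ℂ) ^ (k + 1) * (-1 : ℂ) ^ (k + 1) = 1 := by
          rw [← pow_add]
          exact Even.neg_one_pow ⟨k + 1, by ring⟩
        have h4 : (-1 : ℂ) ^ (k + 1) = -(-1 : ℂ) ^ k := by rw [pow_succ]; ring
        calc (-1 : ℂ) ^ (m - (k + 1))
            = (-1 : ℂ) ^ (m - (k + 1)) * ((-1 : ℂ) ^ (k + 1) * (-1 : ℂ) ^ (k + 1)) := by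
              rw [h2, mul_one]
          _ = (-1 : ℂ) ^ m * (-1 : ℂ) ^ (k + 1) := by rw [← mul_assoc, h1]
          _ = -((-1 : ℂ) ^ k * (-1 : ℂ) ^ m) := by rw [h4]; ring
      push_cast [-Complex.ofReal_cos]
      rw [hj2, ← hcos1]
      have h3 : ((Real.cos (2 * (k : ℝ) * m * Real.pi / (2 * k + 1)) : ℝ) : ℂ)
          = (-1 : ℂ) ^ m * ((Real.cos ((m : ℝ) * Real.pi / (2 * k + 1)) : ℝ) : ℂ) := by
        have := hcos2
        rw [← hcos1] at this
        linear_combination this / 2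
      rw [h3]
      field_simp


noncomputable def omg (k : ℕ) : ℂ := Complex.exp (2 * Real.pi * Complex.I / ((2 * k + 1 : ℕ) : ℂ))

noncomputable def gC (k : ℕ) : Fin (2 * k + 1) → ℂ := fun x => (-1 : ℂ) ^ (dm x) * (dm x : ℂ)

noncomputable def VM (k : ℕ) : Matrix (Fin (2 * k + 1)) (Fin (2 * k + 1)) ℂ :=
  Matrix.of fun a t => (omg k ^ (t : ℕ)) ^ (a : ℕ)

noncomputable def dg (k : ℕ) : Fin (2 * k + 1) → ℂ :=
  fun t => ∑ c : Fin (2 * k + 1), gC k c * (omg k ^ (t : ℕ)) ^ ((-c : Fin (2 * k + 1)) : ℕ)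

lemma hprim (k : ℕ) : IsPrimitiveRoot (omg k) (2 * k + 1) :=
  Complex.isPrimitiveRoot_exp _ (by omega)

lemma pow_val_add (z : ℂ) (hz : z ^ (2 * k + 1) = 1) (x y : Fin (2 * k + 1)) :
    z ^ ((x + y : Fin (2 * k + 1)) : ℕ) = z ^ (x : ℕ) * z ^ (y : ℕ) := by
  rw [← pow_add]
  have h : (x : ℕ) + (y : ℕ) = ((x + y : Fin (2 * k + 1)) : ℕ)
      + (2 * k + 1) * (((x : ℕ) + (y : ℕ)) / (2 * k + 1)) := by
    rw [Fin.val_add]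
    exact (Nat.mod_add_div _ _).symm
  rw [h, pow_add, pow_mul, hz, one_pow, mul_one]

lemma circ_mul_V (k : ℕ) :
    (circMat k).map Complex.ofReal * VM k = VM k * Matrix.diagonal (dg k) := by
  ext a t
  rw [Matrix.mul_apply, Matrix.mul_diagonal]
  have hz1 : (omg k ^ (t : ℕ)) ^ (2 * k + 1) = 1 := by
    rw [← pow_mul, mul_comm (t : ℕ), pow_mul, (hprim k).pow_eq_one, one_pow]
  have hterm : ∀ b, ((circMat k).map Complex.ofReal) a b * VM k b t
      = gC k (a - b) * (omg k ^ (t : ℕ)) ^ (b : ℕ) := by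
    intro b
    rw [Matrix.map_apply, circMat, Matrix.circulant_apply, VM, Matrix.of_apply, gC]
    push_cast
    ring
  rw [Finset.sum_congr rfl fun b _ => hterm b]
  rw [← Equiv.sum_comp (Equiv.subLeft a) (fun b => gC k (a - b) * (omg k ^ (t : ℕ)) ^ (b : ℕ))]
  have hterm2 : ∀ c, gC k (a - (Equiv.subLeft a c)) * (omg k ^ (t : ℕ)) ^ ((Equiv.subLeft a c : Fin (2 * k + 1)) : ℕ)
      = (gC k c * (omg k ^ (t : ℕ)) ^ ((-c : Fin (2 * k + 1)) : ℕ)) * (omg k ^ (t : ℕ)) ^ (a : ℕ) := by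
    intro c
    have h1 : a - (Equiv.subLeft a c) = c := by simp [Equiv.subLeft]
    have h2 : (Equiv.subLeft a c) = a + (-c) := by simp [Equiv.subLeft]; ring
    rw [h1, h2, pow_val_add _ hz1]
    ring
  rw [Finset.sum_congr rfl fun c _ => hterm2 c, ← Finset.sum_mul]
  rw [VM, dg]
  rw [Matrix.of_apply]
  ring

lemma V_det_ne_zero (k : ℕ) : (VM k).det ≠ 0 := by
  have hV : VM k = Matrix.transpose (Matrix.vandermonde fun t : Fin (2 * k + 1) => omg k ^ (t : ℕ)) := by
    ext a t
    rfl
  rw [hV, Matrix.det_transpose]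
  rw [Ne, Matrix.det_vandermonde_eq_zero_iff]
  push_neg
  intro i j hij
  exact Fin.ext ((hprim k).pow_inj i.isLt j.isLt hij)

/-- charpoly is invariant under conjugation -/
lemma charpoly_conj_units {m : Type*} [Fintype m] [DecidableEq m] {R : Type*} [CommRing R]
    (A P : Matrix m m R) (hP : IsUnit P.det) : (P * A * P⁻¹).charpoly = A.charpoly := by
  have hPP : P * P⁻¹ = 1 := Matrix.mul_nonsing_inv P hP
  have hmap : (P.map Polynomial.C) * (P⁻¹.map Polynomial.C) = 1 := by
    rw [← Matrix.map_mul, hPP]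
    exact Matrix.map_one _ (Polynomial.C_0) (Polynomial.C_1)
  have hcomm := Matrix.scalar_commute (n := m) (Polynomial.X : Polynomial R)
    (fun r' => Commute.all _ r') (P⁻¹.map Polynomial.C)
  have hch : (P * A * P⁻¹).charmatrix
      = P.map Polynomial.C * A.charmatrix * P⁻¹.map Polynomial.C := by
    unfold Matrix.charmatrix
    simp only [RingHom.mapMatrix_apply]
    rw [Matrix.mul_sub, Matrix.sub_mul]
    congr 1
    · calc Matrix.scalar m (Polynomial.X : Polynomial R)
          = (P.map Polynomial.C) * ((P⁻¹.map Polynomial.C) * Matrix.scalar m Polynomial.X) := by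
            rw [← Matrix.mul_assoc, hmap, Matrix.one_mul]
        _ = (P.map Polynomial.C) * Matrix.scalar m Polynomial.X * (P⁻¹.map Polynomial.C) := by
            rw [← hcomm.eq, ← Matrix.mul_assoc]
    · rw [Matrix.map_mul, Matrix.map_mul]
  rw [Matrix.charpoly, Matrix.charpoly, hch, Matrix.det_mul, Matrix.det_mul]
  have hdet : (P.map Polynomial.C).det * (P⁻¹.map Polynomial.C).det = 1 := by
    rw [← Matrix.det_mul, hmap, Matrix.det_one]
  calc (P.map Polynomial.C).det * (A.charmatrix).det * (P⁻¹.map Polynomial.C).det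
      = ((P.map Polynomial.C).det * (P⁻¹.map Polynomial.C).det) * (A.charmatrix).det := by ring
    _ = (A.charmatrix).det := by rw [hdet, one_mul]

lemma circ_charpoly_complex (k : ℕ) :
    ((circMat k).map Complex.ofReal).charpoly
      = ∏ t : Fin (2 * k + 1), (Polynomial.X - Polynomial.C (dg k t)) := by
  have hisunit : IsUnit (VM k).det := isUnit_iff_ne_zero.mpr (V_det_ne_zero k)
  have hconj : (circMat k).map Complex.ofReal = VM k * Matrix.diagonal (dg k) * (VM k)⁻¹ := by
    rw [← circ_mul_V k, Matrix.mul_nonsing_inv_cancel_right _ _ hisunit]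
  rw [hconj, charpoly_conj_units _ _ hisunit]
  rw [Matrix.charpoly_of_upperTriangular _ (Matrix.blockTriangular_diagonal _)]
  apply Finset.prod_congr rfl
  intro t _
  rw [Matrix.diagonal_apply_eq]


lemma dg_eq (hk : 0 < k) (t : Fin (2 * k + 1)) : dg k t = ((rhoNat k (t : ℕ) : ℝ) : ℂ) := by
  set z : ℂ := omg k ^ (t : ℕ) with hzdef
  -- step 1 : reindex c ↦ -c
  have step1 : dg k t = ∑ c : Fin (2 * k + 1), gC k c * z ^ (c : ℕ) := by
    rw [dg, ← Equiv.sum_comp (Equiv.neg (Fin (2 * k + 1)))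
      (fun c => gC k c * z ^ ((-c : Fin (2 * k + 1)) : ℕ))]
    apply Finset.sum_congr rfl
    intro c _
    have h1 : (Equiv.neg (Fin (2 * k + 1))) c = -c := rfl
    rw [h1, gC, gC, dm_neg, neg_neg]
  -- step 2 : to a range sum
  have step2 : ∑ c : Fin (2 * k + 1), gC k c * z ^ (c : ℕ)
      = ∑ m ∈ Finset.range (2 * k + 1),
          (-1 : ℂ) ^ (min m (2 * k + 1 - m)) * ((min m (2 * k + 1 - m) : ℕ) : ℂ) * z ^ m := by
    rw [← Fin.sum_univ_eq_sum_range
      (fun m => (-1 : ℂ) ^ (min m (2 * k + 1 - m)) * ((min m (2 * k + 1 - m) : ℕ) : ℂ) * z ^ m)]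
    apply Finset.sum_congr rfl
    intro c _
    rw [gC, dm]
  -- step 3 : split the range
  have hsplit : Finset.range (2 * k + 1) = Finset.range ((k + 1) + k) := by congr 1; omega
  rw [step1, step2, hsplit, Finset.sum_range_add, Finset.sum_range_succ']
  have h0 : (-1 : ℂ) ^ (min 0 (2 * k + 1 - 0)) * ((min 0 (2 * k + 1 - 0) : ℕ) : ℂ) * z ^ 0 = 0 := by
    norm_num
  rw [h0, add_zero]
  -- step 4 : identify the two blocks
  have hblock1 : ∀ i ∈ Finset.range k,
      (-1 : ℂ) ^ (min (i + 1) (2 * k + 1 - (i + 1))) * ((min (i + 1) (2 * k + 1 - (i + 1)) : ℕ) : ℂ)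
          * z ^ (i + 1)
        = (-1 : ℂ) ^ (i + 1) * ((i : ℂ) + 1) * z ^ (i + 1) := by
    intro i hi
    have hie := Finset.mem_range.mp hi
    rw [min_eq_left (by omega)]
    push_cast
    ring
  have hblock2 : ∀ i ∈ Finset.range k,
      (-1 : ℂ) ^ (min (k + 1 + i) (2 * k + 1 - (k + 1 + i)))
          * ((min (k + 1 + i) (2 * k + 1 - (k + 1 + i)) : ℕ) : ℂ) * z ^ (k + 1 + i)
        = (fun K => (-1 : ℂ) ^ (k - K) * ((k - K : ℕ) : ℂ) * z ^ (k + 1 + K)) i := by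
    intro i hi
    have hie := Finset.mem_range.mp hi
    simp only
    rw [min_eq_right (by omega), show 2 * k + 1 - (k + 1 + i) = k - i by omega]
  rw [Finset.sum_congr rfl hblock1, Finset.sum_congr rfl hblock2,
    ← Finset.sum_range_reflect (fun K => (-1 : ℂ) ^ (k - K) * ((k - K : ℕ) : ℂ) * z ^ (k + 1 + K)) k]
  have hblock2' : ∀ m ∈ Finset.range k,
      (fun K => (-1 : ℂ) ^ (k - K) * ((k - K : ℕ) : ℂ) * z ^ (k + 1 + K)) (k - 1 - m)
        = (-1 : ℂ) ^ (m + 1) * ((m : ℂ) + 1) * z ^ (2 * k - m) := by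
    intro m hm
    have hme := Finset.mem_range.mp hm
    simp only
    rw [show k - (k - 1 - m) = m + 1 by omega, show k + 1 + (k - 1 - m) = 2 * k - m by omega]
    push_cast
    ring
  rw [Finset.sum_congr rfl hblock2', ← Finset.sum_add_distrib]
  -- step 5 : identify z with the square of the half-angle exponential
  have hzv : z = (Complex.exp (Real.pi * Complex.I * ((t : ℕ) : ℂ) / (2 * (k : ℂ) + 1))) ^ 2 := by
    rw [hzdef, omg, ← Complex.exp_nat_mul, sq, ← Complex.exp_add]
    congr 1
    have hne : ((2 * k + 1 : ℕ) : ℂ) ≠ 0 := Nat.cast_ne_zero.mpr (by omega)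
    push_cast at hne ⊢
    field_simp
    ring
  have hfin : ∀ m ∈ Finset.range k,
      (-1 : ℂ) ^ (m + 1) * ((m : ℂ) + 1) * z ^ (m + 1)
          + (-1 : ℂ) ^ (m + 1) * ((m : ℂ) + 1) * z ^ (2 * k - m)
        = (-1 : ℂ) ^ (m + 1) * ((m : ℂ) + 1)
          * (((Complex.exp (Real.pi * Complex.I * ((t : ℕ) : ℂ) / (2 * (k : ℂ) + 1))) ^ 2) ^ (m + 1)
            + ((Complex.exp (Real.pi * Complex.I * ((t : ℕ) : ℂ) / (2 * (k : ℂ) + 1))) ^ 2) ^ (2 * k - m)) := by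
    intro m _
    rw [← hzv]
    ring
  rw [Finset.sum_congr rfl hfin]
  exact sum_eq_rho k hk (t : ℕ) (by omega)

lemma multiset_eq (hk : 0 < k) :
    Multiset.map (fun t : Fin (2 * k + 1) => rhoNat k (t : ℕ)) Finset.univ.val
      = lam0 k ::ₘ ∑ j ∈ Finset.range k, Multiset.replicate 2 (mu k j) := by
  have h1 : Multiset.map (fun t : Fin (2 * k + 1) => rhoNat k (t : ℕ)) Finset.univ.val
      = ∑ t : Fin (2 * k + 1), ({rhoNat k (t : ℕ)} : Multiset ℝ) := by
    rw [Finset.sum_eq_multiset_sum]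
    rw [← Multiset.sum_map_singleton
      (Multiset.map (fun t : Fin (2 * k + 1) => rhoNat k (t : ℕ)) Finset.univ.val),
      Multiset.map_map]
    rfl
  rw [h1, Fin.sum_univ_eq_sum_range (fun m => ({rhoNat k m} : Multiset ℝ)),
    show Finset.range (2 * k + 1) = Finset.range ((k + 1) + k) by congr 1; omega,
    Finset.sum_range_add, Finset.sum_range_succ']
  have h0 : ({rhoNat k 0} : Multiset ℝ) = {lam0 k} := by rw [rhoNat, if_pos rfl]
  have hb1 : ∀ i ∈ Finset.range k,
      ({rhoNat k (i + 1)} : Multiset ℝ) = (fun j => ({mu k j} : Multiset ℝ)) (k - 1 - i) := by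
    intro i hi
    have hie := Finset.mem_range.mp hi
    simp only
    rw [rhoNat, if_neg (by omega), if_pos (by omega), show k - (i + 1) = k - 1 - i by omega]
  have hb2 : ∀ i ∈ Finset.range k,
      ({rhoNat k (k + 1 + i)} : Multiset ℝ) = ({mu k i} : Multiset ℝ) := by
    intro i hi
    have hie := Finset.mem_range.mp hi
    rw [rhoNat, if_neg (by omega), if_neg (by omega), show k + 1 + i - (k + 1) = i by omega]
  rw [h0, Finset.sum_congr rfl hb1, Finset.sum_congr rfl hb2,
    Finset.sum_range_reflect (fun j => ({mu k j} : Multiset ℝ)) k]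
  have hrep : ∑ j ∈ Finset.range k, Multiset.replicate 2 (mu k j)
      = (∑ j ∈ Finset.range k, ({mu k j} : Multiset ℝ))
        + ∑ j ∈ Finset.range k, ({mu k j} : Multiset ℝ) := by
    rw [← Finset.sum_add_distrib]
    apply Finset.sum_congr rfl
    intro j _
    rfl
  rw [hrep, ← Multiset.singleton_add]
  abel


lemma circ_roots (k : ℕ) (hk : 0 < k) :
    (circMat k).charpoly.roots
      = lam0 k ::ₘ ∑ j ∈ Finset.range k, Multiset.replicate 2 (mu k j) := by
  have hcoe : ⇑(algebraMap ℝ ℂ) = Complex.ofReal := by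
    funext x
    simp [Complex.coe_algebraMap]
  have hreal : (circMat k).charpoly
      = ∏ t : Fin (2 * k + 1), (Polynomial.X - Polynomial.C (rhoNat k (t : ℕ))) := by
    apply Polynomial.map_injective (algebraMap ℝ ℂ)
      (by rw [hcoe]; exact Complex.ofReal_injective)
    rw [← Matrix.charpoly_map]
    have hM : (circMat k).map ⇑(algebraMap ℝ ℂ) = (circMat k).map Complex.ofReal := by
      rw [hcoe]
    rw [hM, circ_charpoly_complex k, Polynomial.map_prod]
    apply Finset.prod_congr rfl
    intro t _
    rw [Polynomial.map_sub, Polynomial.map_X, Polynomial.map_C, dg_eq hk t]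
    simp only [hcoe]
  have hmm : Multiset.map (fun t : Fin (2 * k + 1) => Polynomial.X - Polynomial.C (rhoNat k (t : ℕ)))
        Finset.univ.val
      = Multiset.map (fun a : ℝ => Polynomial.X - Polynomial.C a)
        (Multiset.map (fun t : Fin (2 * k + 1) => rhoNat k (t : ℕ)) Finset.univ.val) := by
    rw [Multiset.map_map]
    rfl
  rw [hreal, Finset.prod_eq_multiset_prod, hmm,
    Polynomial.roots_multiset_prod_X_sub_C, multiset_eq hk]

end AuxC

open Real in
/-- For an unbalanced signed cycle `C⁻_n` of odd order `n = 2k + 1`,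
one has `D^max(C⁻_n) = D^min(C⁻_n) = D^±(C⁻_n)`, and the spectrum of `D^±(C⁻_n)`
consists of the simple eigenvalue `k·(-1)^k - (1 - (-1)^k)/2` together with the
eigenvalues
`λ_j = k·(-1)^j / sin((2j+1)π/(2n)) - sin²((2j+1)kπ/(2n)) / sin²((2j+1)π/(2n))`,
each with multiplicity `2`, for `j = 0, 1, …, k - 1`. -/
theorem unbalanced_odd_cycle_distance_spectrum (k : ℕ) (hk : 0 < k)
    (σ : Fin (2 * k + 1) → Fin (2 * k + 1) → ℤ)
    (hσ : IsSignature (SimpleGraph.cycleGraph (2 * k + 1)) σ)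
    (hunbal : ¬ IsBalanced (SimpleGraph.cycleGraph (2 * k + 1)) σ) :
    Dmax (SimpleGraph.cycleGraph (2 * k + 1)) σ =
      Dmin (SimpleGraph.cycleGraph (2 * k + 1)) σ ∧
    (Dmax (SimpleGraph.cycleGraph (2 * k + 1)) σ).charpoly.roots =
      ((k : ℝ) * (-1) ^ k - (1 - (-1 : ℝ) ^ k) / 2) ::ₘ
        ∑ j ∈ Finset.range k,
          Multiset.replicate 2
            ((k : ℝ) * (-1) ^ j /
                Real.sin ((2 * (j : ℝ) + 1) * π / (2 * (2 * (k : ℝ) + 1))) -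
              (Real.sin ((2 * (j : ℝ) + 1) * (k : ℝ) * π /
                  (2 * (2 * (k : ℝ) + 1)))) ^ 2 /
                (Real.sin ((2 * (j : ℝ) + 1) * π / (2 * (2 * (k : ℝ) + 1)))) ^ 2) := by
  constructor
  · exact AuxC.Dmax_eq_Dmin hk hσ hunbal
  · rw [AuxC.Dmax_charpoly hk hσ hunbal, AuxC.circ_roots k hk]
    rfl
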